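/- Let r₀ > 0, and suppose f : (r₀, ∞) → ℝ is a C² function with f'(x) > 0 for all x > r₀, satisfying f''(x) = (1 + f'(x)²)(2H(ν_f(x))·√(1 + f'(x)²) − f'(x)/x), where ν_f(x) = 1/√(1 + f'(x)²) and H : [−1,1] → ℝ satisfies H(y) < 0 for y ∈ (−1,1). Then the function x ↦ x·f'(x) is strictly decreasing on (r₀, ∞). -/

import Mathlib

theorem stmt_2 (r₀ : ℝ) (hr₀ : 0 < r₀) (H : ℝ → ℝ)
    (hH : ∀ y ∈ Set.Ioo (-1:ℝ) 1, H y < 0)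
    (f f' f'' : ℝ → ℝ)
    (hderiv : ∀ x ∈ Set.Ioi r₀, HasDerivAt f (f' x) x)
    (hderiv2 : ∀ x ∈ Set.Ioi r₀, HasDerivAt f' (f'' x) x)
    (hcont : ContinuousOn f'' (Set.Ioi r₀))
    (hpos : ∀ x ∈ Set.Ioi r₀, 0 < f' x)
    (hODE : ∀ x ∈ Set.Ioi r₀,
      f'' x = (1 + f' x ^ 2) *
        (2 * H (1 / Real.sqrt (1 + f' x ^ 2)) * Real.sqrt (1 + f' x ^ 2) - f' x / x)) :
    StrictAntiOn (fun x => x * f' x) (Set.Ioi r₀) := by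
  have hg : ∀ x ∈ Set.Ioi r₀,
      HasDerivAt (fun x => x * f' x) (f' x + x * f'' x) x := by
    intro x hx
    have := (hasDerivAt_id' x).mul (hderiv2 x hx)
    exact this.congr_deriv (by ring)
  apply strictAntiOn_of_deriv_neg (convex_Ioi r₀)
  · intro x hx
    exact ((hg x hx).continuousAt).continuousWithinAt
  · intro x hx
    rw [interior_Ioi] at hx
    rw [(hg x hx).deriv]
    have hx0 : (0:ℝ) < x := hr₀.trans hx
    have hf' := hpos x hx
    have hs1 : (1:ℝ) < 1 + f' x ^ 2 := by nlinarith
    have hs0 : (0:ℝ) < 1 + f' x ^ 2 := by linarith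
    have hsqsq0 : Real.sqrt (1 + f' x ^ 2) ^ 2 = 1 + f' x ^ 2 :=
      Real.sq_sqrt hs0.le
    have hsqnn : 0 ≤ Real.sqrt (1 + f' x ^ 2) := Real.sqrt_nonneg _
    have hsq1 : 1 < Real.sqrt (1 + f' x ^ 2) := by nlinarith
    have hsq0 : 0 < Real.sqrt (1 + f' x ^ 2) := by linarith
    have hν : (1 / Real.sqrt (1 + f' x ^ 2)) ∈ Set.Ioo (-1:ℝ) 1 := by
      constructor
      · have : (0:ℝ) < 1 / Real.sqrt (1 + f' x ^ 2) := by positivity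
        linarith
      · rw [div_lt_one hsq0]; exact hsq1
    have hHneg := hH _ hν
    have hsqsq : Real.sqrt (1 + f' x ^ 2) ^ 2 = 1 + f' x ^ 2 :=
      Real.sq_sqrt hs0.le
    rw [hODE x hx]
    have hxne : x ≠ 0 := hx0.ne'
    have : f' x + x * ((1 + f' x ^ 2) *
        (2 * H (1 / Real.sqrt (1 + f' x ^ 2)) * Real.sqrt (1 + f' x ^ 2) - f' x / x))
        = 2 * H (1 / Real.sqrt (1 + f' x ^ 2)) * x * (1 + f' x ^ 2) *
          Real.sqrt (1 + f' x ^ 2) - f' x ^ 3 := by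
      field_simp; ring
    rw [this]
    nlinarith [mul_pos (mul_pos (mul_pos hx0 hs0) hsq0) (neg_pos.mpr hHneg), pow_pos hf' 3]
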